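/- Every convex set in ℝ² is locally nonconical. -/

import Mathlib

open Set Filter Topology

/-- Locally nonconical (LNC). -/
def LNC {X : Type*} [AddCommGroup X] [Module ℝ X] [TopologicalSpace X] (Q : Set X) : Prop :=
  ∀ x ∈ Q, ∀ x' ∈ Q,
    ∃ U, U ⊆ Q ∧ U ∈ nhdsWithin x Q ∧ ∀ u ∈ U, u + (2⁻¹ : ℝ) • (x' - x) ∈ Q

private lemma aux_span {S : Submodule ℝ (ℝ × ℝ)} (hS : S ≠ ⊤) {v w : ℝ × ℝ} (hv : v ∈ S)
    (hv0 : v ≠ 0) (hw : w ∈ S) : ∃ r : ℝ, w = r • v := by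
  have hle : Submodule.span ℝ {v} ≤ S := Submodule.span_le.2 (by simpa using hv)
  have h2 : Module.finrank ℝ (ℝ × ℝ) = 2 := by simp
  have hlt : Module.finrank ℝ S < 2 := h2 ▸ Submodule.finrank_lt hS
  have h1 : Module.finrank ℝ (Submodule.span ℝ ({v} : Set (ℝ × ℝ))) = 1 :=
    finrank_span_singleton hv0
  have heq : Submodule.span ℝ {v} = S :=
    Submodule.eq_of_le_of_finrank_le hle (by omega)
  obtain ⟨r, hr⟩ := Submodule.mem_span_singleton.1 (heq ▸ hw)
  exact ⟨r, hr.symm⟩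

/-- combination lemma: x + θ•(x'-x) ∈ Q for θ ∈ [0,1]. -/
private lemma seg_mem {Q : Set (ℝ × ℝ)} (hconv : Convex ℝ Q) {x x' : ℝ × ℝ}
    (hx : x ∈ Q) (hx' : x' ∈ Q) {θ : ℝ} (h0 : 0 ≤ θ) (h1 : θ ≤ 1) :
    x + θ • (x' - x) ∈ Q := by
  have := hconv hx hx' (by linarith : (0:ℝ) ≤ 1 - θ) h0 (by ring)
  convert this using 1
  module


set_option maxHeartbeats 2000000

/-- Every convex set in `ℝ²` is locally nonconical. -/
theorem convex_R2_lnc (Q : Set (ℝ × ℝ)) (hconv : Convex ℝ Q) : LNC Q := by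
  intro x hx x' hx'
  set v : ℝ × ℝ := (2⁻¹ : ℝ) • (x' - x) with hv_def
  suffices h : ∃ ε > 0, ∀ u ∈ Q, ‖u - x‖ < ε → u + v ∈ Q by
    obtain ⟨ε, hε, hQ⟩ := h
    refine ⟨Q ∩ Metric.ball x ε, inter_subset_left, ?_, ?_⟩
    · exact inter_mem self_mem_nhdsWithin
        (mem_nhdsWithin_of_mem_nhds (Metric.ball_mem_nhds x hε))
    · rintro u ⟨huQ, hub⟩
      exact hQ u huQ (by simpa [dist_eq_norm] using hub)
  by_cases hxx : x' = x
  · exact ⟨1, one_pos, fun u hu _ => by simp [hv_def, hxx, hu]⟩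
  have hv0 : v ≠ 0 := by
    simp only [hv_def]
    intro h
    rcases smul_eq_zero.1 h with h1 | h1
    · norm_num at h1
    · exact hxx (sub_eq_zero.1 h1)
  have hδ : 0 < ‖v‖ := norm_pos_iff.2 hv0
  set m : ℝ × ℝ := x + v with hm_def
  have hmQ : m ∈ Q := by
    simpa [hm_def, hv_def] using seg_mem hconv hx hx' (by norm_num : (0:ℝ) ≤ 2⁻¹) (by norm_num)
  clear_value v m
  by_cases hm : m ∈ interior Q
  · obtain ⟨ε, hε, hball⟩ := Metric.mem_nhds_iff.1 (mem_interior_iff_mem_nhds.1 hm)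
    refine ⟨ε, hε, fun u hu hun => hball ?_⟩
    have : u + v - m = u - x := by simp only [hm_def]; abel
    simp only [Metric.mem_ball, dist_eq_norm, this]
    exact hun
  by_cases hint : (interior Q).Nonempty
  · -- main 2-dimensional case: supporting line through m
    obtain ⟨q, hq⟩ := hint
    obtain ⟨f, hf⟩ := geometric_hahn_banach_open_point (hconv.interior) isOpen_interior hm
    have hqQ : q ∈ Q := interior_subset hq
    have hfle : ∀ u ∈ Q, f u ≤ f m := by
      intro u hu
      by_contra hgt
      push_neg at hgt
      set d : ℝ := f u - f m with hd_def
      set H : ℝ := f m - f q with hH_def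
      have hd : 0 < d := by simp only [hd_def]; linarith
      have hH : 0 < H := by simp only [hH_def]; linarith [hf q hq]
      have hHd : 0 < H + d := by linarith
      set t : ℝ := d / (2 * (H + d)) with ht_def
      have ht0 : 0 < t := div_pos hd (by linarith)
      have ht1 : t < 1 := by rw [ht_def, div_lt_one (by linarith)]; linarith
      clear_value d H
      have hteq : t * (H + d) = d / 2 := by
        rw [ht_def]; field_simp
      clear_value t
      have hmem := hconv.combo_interior_closure_mem_interior hq (subset_closure hu)
        ht0 (by linarith : (0:ℝ) ≤ 1 - t) (by ring)
      have hlt := hf _ hmem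
      rw [map_add, map_smul, map_smul] at hlt
      simp only [smul_eq_mul] at hlt
      nlinarith [hlt]
    have hfxm : f x = f m := by
      have h1 := hfle x hx
      have h2 := hfle x' hx'
      have h3 : f m = f x + 2⁻¹ * (f x' - f x) := by
        simp [hm_def, hv_def, map_add, map_smul, map_sub, smul_eq_mul]
      linarith
    have hfv : f v = 0 := by
      have h1 := hfle x' hx'
      have h3 : f m = f x + 2⁻¹ * (f x' - f x) := by
        simp [hm_def, hv_def, map_add, map_smul, map_sub, smul_eq_mul]
      have h4 : f v = 2⁻¹ * (f x' - f x) := by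
        simp [hv_def, map_smul, map_sub, smul_eq_mul]
      rw [h4]; linarith
    have hker : LinearMap.ker (f : ℝ × ℝ →ₗ[ℝ] ℝ) ≠ ⊤ := by
      intro htop
      have h1 : f q = 0 := by
        have : q ∈ LinearMap.ker (f : ℝ × ℝ →ₗ[ℝ] ℝ) := htop ▸ Submodule.mem_top
        simpa using this
      have h2 : f m = 0 := by
        have : m ∈ LinearMap.ker (f : ℝ × ℝ →ₗ[ℝ] ℝ) := htop ▸ Submodule.mem_top
        simpa using this
      have h3 := hf q hq
      rw [h1, h2] at h3
      exact lt_irrefl _ h3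
    have hvker : v ∈ LinearMap.ker (f : ℝ × ℝ →ₗ[ℝ] ℝ) := by simpa [LinearMap.mem_ker] using hfv
    set c : ℝ := f m with hc_def
    set H : ℝ := c - f q with hH_def
    have hH : 0 < H := by simp only [hH_def, hc_def]; linarith [hf q hq]
    set K : ℝ := ‖f‖ + 1 with hK_def
    have hK : 0 < K := by positivity
    set C : ℝ := ‖m - q‖ with hC_def
    have hC : 0 ≤ C := norm_nonneg _
    have hden : 0 < H + K * C := by positivity
    set ε : ℝ := min (H / (2 * K)) (‖v‖ * H / (4 * (H + K * C))) with hε_def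
    have hε : 0 < ε := lt_min (by positivity) (by positivity)
    clear_value c H K C ε
    refine ⟨ε, hε, fun u hu hun => ?_⟩
    set h : ℝ := c - f u with hh_def
    have hh0 : 0 ≤ h := by simp only [hh_def]; linarith [hfle u hu]
    clear_value h
    have hhK : h < K * ε := by
      have h1 : f (x - u) ≤ ‖f‖ * ‖x - u‖ :=
        calc f (x - u) ≤ |f (x - u)| := le_abs_self _
          _ = ‖f (x - u)‖ := (Real.norm_eq_abs _).symm
          _ ≤ ‖f‖ * ‖x - u‖ := f.le_opNorm _
      have h2 : ‖x - u‖ < ε := by rwa [norm_sub_rev]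
      have h3 : h = f (x - u) := by rw [map_sub, hh_def, hfxm]
      have h4 : ‖f‖ * ‖x - u‖ ≤ ‖f‖ * ε := mul_le_mul_of_nonneg_left h2.le (norm_nonneg _)
      rw [h3, hK_def]
      nlinarith [norm_nonneg f]
    set t : ℝ := h / H with ht_def
    have ht0 : 0 ≤ t := div_nonneg hh0 hH.le
    clear_value t
    have htup : t < K * ε / H := by
      rw [ht_def, div_lt_div_iff₀ hH hH]
      exact mul_lt_mul_of_pos_right hhK hH
    have hεK : K * ε / H ≤ 2⁻¹ := by
      have h1 : ε ≤ H / (2 * K) := hε_def ▸ min_le_left _ _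
      have h2 : K * (H / (2 * K)) = H / 2 := by field_simp
      have h3 : K * ε ≤ H / 2 := by
        calc K * ε ≤ K * (H / (2 * K)) := mul_le_mul_of_nonneg_left h1 hK.le
          _ = H / 2 := h2
      rw [div_le_iff₀ hH]
      linarith
    have ht2 : t ≤ 2⁻¹ := le_of_lt (lt_of_lt_of_le htup hεK)
    have h1t0 : 0 < 1 - t := by linarith
    set s : ℝ × ℝ := (1 - t)⁻¹ • (u + v - t • q) with hs_def
    have hs_comb : (1 - t) • s = u + v - t • q := smul_inv_smul₀ (ne_of_gt h1t0) _
    clear_value s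
    have hfs : f s = c := by
      have h3 := congrArg f hs_comb
      simp only [map_smul, map_sub, map_add, smul_eq_mul, hfv] at h3
      have hfu : f u = c - h := by rw [hh_def]; ring
      have hfq : f q = c - H := by rw [hH_def]; ring
      have h5 : (1 - t) * f s = (1 - t) * c := by
        rw [h3, hfu, hfq, ht_def]
        field_simp
        ring
      exact mul_left_cancel₀ (ne_of_gt h1t0) h5
    have hsker : s - m ∈ LinearMap.ker (f : ℝ × ℝ →ₗ[ℝ] ℝ) := by
      rw [LinearMap.mem_ker, ContinuousLinearMap.coe_coe, map_sub, hfs]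
      simp [hc_def]
    obtain ⟨r, hr⟩ := aux_span hker hvker hv0 hsker
    have hsm : (1 - t) • (s - m) = (u - x) + t • (m - q) := by
      rw [smul_sub, hs_comb, hm_def]
      module
    have hnorm1 : (1 - t) * ‖s - m‖ ≤ ‖u - x‖ + t * C := by
      have h6 := congrArg norm hsm
      rw [norm_smul, Real.norm_eq_abs, abs_of_pos h1t0] at h6
      rw [h6]
      calc ‖(u - x) + t • (m - q)‖ ≤ ‖u - x‖ + ‖t • (m - q)‖ := norm_add_le _ _
        _ = ‖u - x‖ + t * C := by
            rw [hC_def, norm_smul, Real.norm_eq_abs, abs_of_nonneg ht0]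
    have e1 : ‖s - m‖ ≤ 2 * (‖u - x‖ + t * C) := by
      nlinarith [mul_nonneg (by linarith : (0:ℝ) ≤ 1 - t - 2⁻¹) (norm_nonneg (s - m)),
        norm_nonneg (s - m)]
    have e2 : ‖u - x‖ + t * C < ε + K * ε / H * C := by
      have := mul_le_mul_of_nonneg_right htup.le hC
      linarith
    have e3 : ε + K * ε / H * C ≤ ‖v‖ / 4 := by
      have h2 : ε ≤ ‖v‖ * H / (4 * (H + K * C)) := hε_def ▸ min_le_right _ _
      have e3a : ε * (H + K * C) ≤ ‖v‖ * H / 4 := by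
        calc ε * (H + K * C) ≤ ‖v‖ * H / (4 * (H + K * C)) * (H + K * C) :=
              mul_le_mul_of_nonneg_right h2 hden.le
          _ = ‖v‖ * H / 4 := by
              field_simp
      have h7 : ε + K * ε / H * C = ε * (H + K * C) / H := by field_simp
      rw [h7, div_le_iff₀ hH]
      linarith [e3a]
    have hbound : ‖s - m‖ < ‖v‖ := by linarith
    have hrlt : |r| < 1 := by
      have hn : ‖s - m‖ = |r| * ‖v‖ := by rw [hr, norm_smul, Real.norm_eq_abs]
      have h8 : |r| * ‖v‖ < 1 * ‖v‖ := by rw [← hn, one_mul]; exact hbound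
      exact lt_of_mul_lt_mul_right h8 (le_of_lt hδ)
    have hsx : s = x + ((r + 1) / 2) • (x' - x) := by
      have h9 : s = r • v + m := sub_eq_iff_eq_add.1 hr
      rw [h9, hm_def, hv_def]
      module
    have hsQ : s ∈ Q := by
      rw [hsx]
      rcases abs_lt.1 hrlt with ⟨hra, hrb⟩
      exact seg_mem hconv hx hx' (by linarith) (by linarith)
    have hfin : (1 - t) • s + t • q = u + v := by rw [hs_comb]; abel
    rw [← hfin]
    exact hconv hsQ hqQ (by linarith) ht0 (by ring)
  · -- degenerate: Q in a line
    have hspan : affineSpan ℝ Q ≠ ⊤ := by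
      intro h
      exact hint (hconv.interior_nonempty_iff_affineSpan_eq_top.2 h)
    have hdir : (affineSpan ℝ Q).direction ≠ ⊤ := by
      intro h
      exact hspan ((AffineSubspace.direction_eq_top_iff_of_nonempty
        (⟨x, subset_affineSpan ℝ Q hx⟩)).1 h)
    have hvmem : v ∈ (affineSpan ℝ Q).direction := by
      have : x' - x ∈ (affineSpan ℝ Q).direction :=
        AffineSubspace.vsub_mem_direction (subset_affineSpan ℝ Q hx')
          (subset_affineSpan ℝ Q hx)
      rw [hv_def]
      exact Submodule.smul_mem _ _ this
    refine ⟨‖v‖, hδ, fun u hu hun => ?_⟩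
    have humem : u - x ∈ (affineSpan ℝ Q).direction :=
      AffineSubspace.vsub_mem_direction (subset_affineSpan ℝ Q hu)
        (subset_affineSpan ℝ Q hx)
    obtain ⟨r, hr⟩ := aux_span hdir hvmem hv0 humem
    have hrlt : |r| < 1 := by
      have hn : ‖u - x‖ = |r| * ‖v‖ := by rw [hr, norm_smul, Real.norm_eq_abs]
      have : |r| * ‖v‖ < 1 * ‖v‖ := by rw [← hn, one_mul]; exact hun
      exact lt_of_mul_lt_mul_right this (le_of_lt hδ)
    have key : u + v = x + ((r + 1) / 2) • (x' - x) := by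
      have : u = x + r • v := by rw [← hr]; abel
      rw [this, hv_def]
      module
    rw [key]
    refine seg_mem hconv hx hx' ?_ ?_ <;> cases abs_lt.1 hrlt <;> linarith
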